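/- Let E be a real Banach space, A : E →L[ℝ] E continuous linear, and let g : E → E be twice continuously (Fréchet) differentiable. Fix h ∈ ℝ, w ∈ E and σ₂ ∈ ℝ. Define c : E → E by c(x) = A(g(x)) - (Dg)(x)(Ax) and, for σ₁ ∈ ℝ, Ψ(σ₁) = exp(-(1-σ₁)hA)( (Dg)(exp(-σ₁hA)w)( exp(-(σ₁-σ₂)hA)( g(exp(-σ₂hA) w) ) ) ). Then Ψ is differentiable in σ₁ with Ψ'(σ₁) = h • exp(-(1-σ₁)hA)( (Dc)(exp(-σ₁hA)w)( exp(-(σ₁-σ₂)hA)( g(exp(-σ₂hA)w) ) ) ). -/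

import Mathlib

set_option synthInstance.maxHeartbeats 1000000

/-- The operator exponential `exp(tA)` of a continuous linear operator. -/
noncomputable def opexp {E : Type*} [NormedAddCommGroup E] [NormedSpace ℝ E]
    [CompleteSpace E] (A : E →L[ℝ] E) (t : ℝ) : E →L[ℝ] E :=
  NormedSpace.exp (t • A)

lemma hasDerivAt_opexp_affine {E : Type*} [NormedAddCommGroup E] [NormedSpace ℝ E]
    [CompleteSpace E] (A : E →L[ℝ] E) {a b s c : ℝ} (hc : c = a * s + b) :
    HasDerivAt (fun t : ℝ => opexp A (a * t + b)) (a • (opexp A c * A)) s := by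
  have h1 : HasDerivAt (fun t : ℝ => a * t + b) a s := by
    simpa using ((hasDerivAt_id s).const_mul a).add_const b
  have h2 := hasDerivAt_exp_smul_const (𝕂 := ℝ) A (a * s + b)
  have h3 := h2.scomp s h1
  subst hc
  exact h3

lemma opexp_comm_apply {E : Type*} [NormedAddCommGroup E] [NormedSpace ℝ E]
    [CompleteSpace E] (A : E →L[ℝ] E) (t : ℝ) (y : E) :
    A (opexp A t y) = opexp A t (A y) := by
  have h : Commute A (NormedSpace.exp (t • A)) :=
    ((Commute.refl A).smul_right t).exp_right
  have := congrArg (fun M : E →L[ℝ] E => M y) h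
  simpa [opexp, ContinuousLinearMap.mul_apply] using this

/-- Section 5.2: the `σ₁`-derivative of the order-two integrand
`Ψ(σ₁) = exp(-(1-σ₁)hA) (Dg)(exp(-σ₁hA)w)( exp(-(σ₁-σ₂)hA) g(exp(-σ₂hA)w) )` equals
`h • exp(-(1-σ₁)hA) (Dc)(exp(-σ₁hA)w)( exp(-(σ₁-σ₂)hA) g(exp(-σ₂hA)w) )` where
`c(x) = A g(x) - (Dg)(x)(Ax)` is the Lie commutator. -/
theorem stmt_12 {E : Type*} [NormedAddCommGroup E] [NormedSpace ℝ E] [CompleteSpace E]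
    (A : E →L[ℝ] E) (g : E → E) (hg : ContDiff ℝ 2 g)
    (h : ℝ) (w : E) (σ₂ : ℝ) (σ₁ : ℝ) :
    HasDerivAt
      (fun s : ℝ => opexp A (-((1 - s) * h))
        ((fderiv ℝ g (opexp A (-(s * h)) w))
          (opexp A (-((s - σ₂) * h)) (g (opexp A (-(σ₂ * h)) w)))))
      (h • opexp A (-((1 - σ₁) * h))
        ((fderiv ℝ (fun x => A (g x) - (fderiv ℝ g x) (A x)) (opexp A (-(σ₁ * h)) w))
          (opexp A (-((σ₁ - σ₂) * h)) (g (opexp A (-(σ₂ * h)) w))))) σ₁ := by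
  set P : E := opexp A (-(σ₁ * h)) w with hP
  set vg : E := g (opexp A (-(σ₂ * h)) w) with hvg
  set v' : E := opexp A (-((σ₁ - σ₂) * h)) vg with hv'
  -- derivative of U
  have hU : HasDerivAt (fun s : ℝ => opexp A (-((1 - s) * h)))
      (h • (opexp A (-((1 - σ₁) * h)) * A)) σ₁ := by
    have e : (fun s : ℝ => opexp A (-((1 - s) * h)))
        = fun s : ℝ => opexp A (h * s + (-h)) := by
      funext t; congr 1; ring
    rw [e]
    exact hasDerivAt_opexp_affine A (by ring)
  -- derivative of x(s) = opexp A (-(s h)) w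
  have hx : HasDerivAt (fun s : ℝ => opexp A (-(s * h)) w)
      (((-h) • (opexp A (-(σ₁ * h)) * A)) w) σ₁ := by
    have e : (fun s : ℝ => opexp A (-(s * h)))
        = fun s : ℝ => opexp A ((-h) * s + 0) := by
      funext t; congr 1; ring
    have hop : HasDerivAt (fun s : ℝ => opexp A (-(s * h)))
        ((-h) • (opexp A (-(σ₁ * h)) * A)) σ₁ := by
      rw [e]; exact hasDerivAt_opexp_affine A (by ring)
    simpa using hop.clm_apply (hasDerivAt_const σ₁ w)
  -- derivative of V(s) vg
  have hV : HasDerivAt (fun s : ℝ => opexp A (-((s - σ₂) * h)) vg)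
      (((-h) • (opexp A (-((σ₁ - σ₂) * h)) * A)) vg) σ₁ := by
    have e : (fun s : ℝ => opexp A (-((s - σ₂) * h)))
        = fun s : ℝ => opexp A ((-h) * s + σ₂ * h) := by
      funext t; congr 1; ring
    have hop : HasDerivAt (fun s : ℝ => opexp A (-((s - σ₂) * h)))
        ((-h) • (opexp A (-((σ₁ - σ₂) * h)) * A)) σ₁ := by
      rw [e]; exact hasDerivAt_opexp_affine A (by ring)
    simpa using hop.clm_apply (hasDerivAt_const σ₁ vg)
  -- second derivative of g
  set f'' : E →L[ℝ] E →L[ℝ] E := fderiv ℝ (fderiv ℝ g) P with hf''def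
  have hgd : Differentiable ℝ g := hg.differentiable two_ne_zero
  have hg1 : ContDiff ℝ 1 (fderiv ℝ g) := hg.fderiv_right (by norm_num)
  have hf' : HasFDerivAt (fderiv ℝ g) f'' P :=
    ((hg1.differentiable one_ne_zero) P).hasFDerivAt
  have hB : HasDerivAt (fun s : ℝ => fderiv ℝ g (opexp A (-(s * h)) w))
      (f'' (((-h) • (opexp A (-(σ₁ * h)) * A)) w)) σ₁ :=
    hf'.comp_hasDerivAt σ₁ hx
  have hBV := hB.clm_apply hV
  have hΨ := hU.clm_apply hBV
  -- fderiv of the commutator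
  have hφ1 : HasFDerivAt (fun x => A (g x)) (A.comp (fderiv ℝ g P)) P :=
    A.hasFDerivAt.comp P (hgd P).hasFDerivAt
  have hφ2 : HasFDerivAt (fun x => (fderiv ℝ g x) (A x))
      ((fderiv ℝ g P).comp A + f''.flip (A P)) P :=
    hf'.clm_apply A.hasFDerivAt
  have hφ : fderiv ℝ (fun x => A (g x) - (fderiv ℝ g x) (A x)) P
      = A.comp (fderiv ℝ g P) - ((fderiv ℝ g P).comp A + f''.flip (A P)) :=
    (hφ1.sub hφ2).fderiv
  have hsymm : ∀ y z : E, f'' y z = f'' z y := fun y z =>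
    (hg.contDiffAt.isSymmSndFDerivAt (by norm_num)) y z
  convert hΨ using 1
  rw [hφ]
  have hAP : opexp A (-(σ₁ * h)) (A w) = A P := (opexp_comm_apply A _ w).symm
  have hAv' : opexp A (-((σ₁ - σ₂) * h)) (A vg) = A v' :=
    (opexp_comm_apply A _ vg).symm
  simp only [ContinuousLinearMap.smul_apply, ContinuousLinearMap.mul_apply,
    ContinuousLinearMap.sub_apply, ContinuousLinearMap.add_apply,
    ContinuousLinearMap.coe_comp', Function.comp_apply, ContinuousLinearMap.flip_apply,
    map_smul, map_add, map_sub, smul_smul, hAP, hAv', ← hP, ← hv']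
  rw [hsymm v' (A P), opexp_comm_apply]
  module
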